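/- For every integer n ≥ 0, the super ballot number (6/(n+3))·C_{n+1} satisfies (6/(n+3))·C_{n+1} = 2·∑_{0 ≤ k ≤ n/2} 2^{n-2k} · C(n, 2k) · C_k − ∑_{0 ≤ k ≤ (n-1)/2} 2^{n-2k} · C(n, 2k+1) · C_k · (2k+1)/(k+2), as an identity of rational numbers. -/

import Mathlib

private def Fq (n k : ℕ) : ℚ := 2^n / 4^k * (n.choose (2*k)) * (catalan k)

private def aq (n k : ℕ) : ℚ :=
  2^n / 4^k * (n.choose (2*k+1)) * (catalan k) * (2*(k:ℚ)+1) / ((k:ℚ)+2)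

private def Gt (n : ℕ) : ℕ → ℚ
  | 0 => 0
  | (k+1) => 2*(2*(k:ℚ)+1) * (2^n / 4^k) * (n.choose (2*k+1)) * (catalan k)

private def Ga (n k : ℕ) : ℚ := -(4*(k:ℚ)) / ((n:ℚ)+3) * Fq n k

private lemma choose_rule (n k : ℕ) :
    ((n.choose (k+1)):ℚ) * ((k:ℚ)+1) = (n.choose k : ℚ) * ((n:ℚ) - (k:ℚ)) := by
  rcases le_or_gt k n with h | h
  · have := Nat.choose_succ_right_eq n k
    have hc : ((n.choose (k+1) * (k+1) : ℕ) : ℚ) = ((n.choose k * (n - k) : ℕ) : ℚ) := by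
      exact_mod_cast congrArg (Nat.cast (R := ℚ)) this
    push_cast [Nat.cast_sub h] at hc
    linarith [hc]
  · rw [Nat.choose_eq_zero_of_lt h, Nat.choose_eq_zero_of_lt (show n < k+1 by omega)]
    push_cast
    ring

private lemma cat_rule (k : ℕ) :
    ((k:ℚ)+2) * (catalan (k+1) : ℚ) = 2*(2*(k:ℚ)+1) * (catalan k : ℚ) := by
  have h1 := succ_mul_catalan_eq_centralBinom (k+1)
  have h2 := Nat.succ_mul_centralBinom_succ k
  have h3 := succ_mul_catalan_eq_centralBinom k
  have hne : ((k:ℚ)+1) ≠ 0 := by positivity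
  have h1' : ((k:ℚ)+2) * (catalan (k+1) : ℚ) = ((k+1).centralBinom : ℚ) := by
    exact_mod_cast congrArg (Nat.cast (R := ℚ)) h1
  have h2' : ((k:ℚ)+1) * ((k+1).centralBinom : ℚ) = 2*(2*(k:ℚ)+1) * (k.centralBinom : ℚ) := by
    exact_mod_cast congrArg (Nat.cast (R := ℚ)) h2
  have h3' : ((k:ℚ)+1) * (catalan k : ℚ) = (k.centralBinom : ℚ) := by
    exact_mod_cast congrArg (Nat.cast (R := ℚ)) h3
  have key : ((k:ℚ)+1) * (((k:ℚ)+2) * (catalan (k+1) : ℚ))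
      = ((k:ℚ)+1) * (2*(2*(k:ℚ)+1) * (catalan k : ℚ)) := by
    rw [h1', h2', ← h3']
    ring
  exact mul_left_cancel₀ hne key

private lemma cert1 (n k : ℕ) :
    2*(2*(n:ℚ)+3) * Fq n k - ((n:ℚ)+3) * Fq (n+1) k = Gt n (k+1) - Gt n k := by
  cases k with
  | zero =>
      simp only [Fq, Gt, Nat.mul_zero, Nat.zero_add, Nat.choose_zero_right,
        Nat.choose_one_right, catalan_zero]
      push_cast
      ring
  | succ j =>
      have hne1 : (2*(j:ℚ)+2) ≠ 0 := by positivity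
      have hne2 : (2*(j:ℚ)+3) ≠ 0 := by positivity
      have hne3 : (2*(2*(j:ℚ)+1)) ≠ 0 := by positivity
      have hv : (n.choose (2*j+2) : ℚ)
          = (n.choose (2*j+1) : ℚ) * ((n:ℚ) - (2*(j:ℚ)+1)) / (2*(j:ℚ)+2) := by
        rw [eq_div_iff hne1]
        have := choose_rule n (2*j+1)
        rw [show 2*j+1+1 = 2*j+2 by omega] at this
        push_cast at this
        linarith [this]
      have hw : (n.choose (2*j+3) : ℚ)
          = (n.choose (2*j+2) : ℚ) * ((n:ℚ) - (2*(j:ℚ)+2)) / (2*(j:ℚ)+3) := by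
        rw [eq_div_iff hne2]
        have := choose_rule n (2*j+2)
        rw [show 2*j+2+1 = 2*j+3 by omega] at this
        push_cast at this
        linarith [this]
      have hp : ((n+1).choose (2*j+2) : ℚ)
          = (n.choose (2*j+1) : ℚ) + (n.choose (2*j+2) : ℚ) := by
        rw [show 2*j+2 = (2*j+1)+1 by omega, Nat.choose_succ_succ]
        push_cast
        ring
      have hc : (catalan j : ℚ) = ((j:ℚ)+2) * (catalan (j+1) : ℚ) / (2*(2*(j:ℚ)+1)) := by
        rw [eq_div_iff hne3]
        linear_combination - cat_rule j
      simp only [Fq, Gt]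
      rw [show 2*(j+1)+1 = 2*j+3 by omega, show 2*(j+1) = 2*j+2 by omega]
      rw [hp, hw, hv, hc]
      have h4 : ((4:ℚ)^j) ≠ 0 := by positivity
      field_simp
      push_cast
      ring

private lemma cert2 (n k : ℕ) :
    2*(n:ℚ)/((n:ℚ)+3) * Fq n k - aq n k = Ga n (k+1) - Ga n k := by
  have hne1 : (2*(k:ℚ)+1) ≠ 0 := by positivity
  have hne2 : (2*(k:ℚ)+2) ≠ 0 := by positivity
  have hne4 : ((k:ℚ)+2) ≠ 0 := by positivity
  have hn3 : ((n:ℚ)+3) ≠ 0 := by positivity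
  have hu : (n.choose (2*k+1) : ℚ)
      = (n.choose (2*k) : ℚ) * ((n:ℚ) - 2*(k:ℚ)) / (2*(k:ℚ)+1) := by
    rw [eq_div_iff hne1]
    have := choose_rule n (2*k)
    push_cast at this
    linarith [this]
  have hv : (n.choose (2*k+2) : ℚ)
      = (n.choose (2*k+1) : ℚ) * ((n:ℚ) - (2*(k:ℚ)+1)) / (2*(k:ℚ)+2) := by
    rw [eq_div_iff hne2]
    have := choose_rule n (2*k+1)
    rw [show 2*k+1+1 = 2*k+2 by omega] at this
    push_cast at this
    linarith [this]
  have hd : (catalan (k+1) : ℚ) = 2*(2*(k:ℚ)+1) * (catalan k : ℚ) / ((k:ℚ)+2) := by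
    rw [eq_div_iff hne4]
    linear_combination cat_rule k
  simp only [Fq, aq, Ga]
  rw [show 2*(k+1) = 2*k+2 by omega]
  rw [hv, hu, hd]
  have h4 : ((4:ℚ)^k) ≠ 0 := by positivity
  push_cast
  field_simp
  ring

private lemma Fq_eq_zero {n k : ℕ} (h : n < 2*k) : Fq n k = 0 := by
  simp [Fq, Nat.choose_eq_zero_of_lt h]

private lemma aq_eq_zero {n k : ℕ} (h : n < 2*k+1) : aq n k = 0 := by
  simp [aq, Nat.choose_eq_zero_of_lt h]

private lemma touchard (n : ℕ) :
    ∑ k ∈ Finset.range (n+2), Fq n k = (catalan (n+1) : ℚ) := by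
  induction n with
  | zero =>
      norm_num [Finset.sum_range_succ, Fq, catalan_one]
  | succ n ih =>
      have tel := Finset.sum_range_sub (Gt n) (n+3)
      have hGt0 : Gt n 0 = 0 := rfl
      have hGtN : Gt n (n+3) = 0 := by
        show 2*(2*((n+2:ℕ):ℚ)+1) * (2^n / 4^(n+2)) * (n.choose (2*(n+2)+1)) * (catalan (n+2)) = 0
        rw [Nat.choose_eq_zero_of_lt (show n < 2*(n+2)+1 by omega)]
        push_cast
        ring
      have hsum : ∑ k ∈ Finset.range (n+3),
          (2*(2*(n:ℚ)+3) * Fq n k - ((n:ℚ)+3) * Fq (n+1) k) = 0 := by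
        rw [Finset.sum_congr rfl (fun k _ => cert1 n k), tel, hGt0, hGtN, sub_zero]
      rw [Finset.sum_sub_distrib, ← Finset.mul_sum, ← Finset.mul_sum] at hsum
      have hFn : ∑ k ∈ Finset.range (n+3), Fq n k = (catalan (n+1) : ℚ) := by
        rw [Finset.sum_range_succ, ih, Fq_eq_zero (show n < 2*(n+2) by omega), add_zero]
      rw [hFn] at hsum
      have h3 : ((n:ℚ)+3) ≠ 0 := by positivity
      have hcat := cat_rule (n+1)
      rw [show n+1+1 = n+2 from rfl] at hcat
      push_cast at hcat
      have key : ((n:ℚ)+3) * ∑ k ∈ Finset.range (n+3), Fq (n+1) k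
          = ((n:ℚ)+3) * (catalan (n+2) : ℚ) := by
        linear_combination - hsum - hcat
      exact mul_left_cancel₀ h3 key

private lemma amdeberhan (n : ℕ) :
    ∑ k ∈ Finset.range (n+2), aq n k = 2*(n:ℚ)/((n:ℚ)+3) * (catalan (n+1) : ℚ) := by
  have tel := Finset.sum_range_sub (Ga n) (n+2)
  have hGa0 : Ga n 0 = 0 := by simp [Ga]
  have hGaN : Ga n (n+2) = 0 := by
    rw [Ga, Fq_eq_zero (show n < 2*(n+2) by omega), mul_zero]
  have hsum : ∑ k ∈ Finset.range (n+2),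
      (2*(n:ℚ)/((n:ℚ)+3) * Fq n k - aq n k) = 0 := by
    rw [Finset.sum_congr rfl (fun k _ => cert2 n k), tel, hGa0, hGaN, sub_zero]
  rw [Finset.sum_sub_distrib, ← Finset.mul_sum, touchard n, sub_eq_zero] at hsum
  exact hsum.symm

private lemma pow_cast_eq {n k : ℕ} (h : 2*k ≤ n) : (2:ℚ)^(n-2*k) = 2^n / 4^k := by
  have h4 : (4:ℚ)^k = 2^(2*k) := by
    rw [show (4:ℚ) = 2^2 by norm_num, ← pow_mul]
  rw [h4, eq_div_iff (by positivity), ← pow_add]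
  congr 1
  omega

/-- The super ballot number `(6/(n+3)) * C (n+1)` equals twice the Touchard sum minus the
Amdeberhan sum, as an identity of rational numbers. -/
theorem super_ballot_identity (n : ℕ) :
    (6 / (n + 3) : ℚ) * (catalan (n + 1) : ℚ) =
      2 * ∑ k ∈ Finset.Icc 0 (n / 2),
            2 ^ (n - 2 * k) * (n.choose (2 * k) : ℚ) * (catalan k : ℚ)
      - ∑ k ∈ Finset.range ((n + 1) / 2),
            2 ^ (n - 2 * k) * (n.choose (2 * k + 1) : ℚ) * (catalan k : ℚ) *
              (2 * k + 1) / (k + 2) := by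
  have heven : (∑ k ∈ Finset.Icc 0 (n / 2),
      (2:ℚ) ^ (n - 2 * k) * (n.choose (2 * k) : ℚ) * (catalan k : ℚ))
      = ∑ k ∈ Finset.range (n+2), Fq n k := by
    rw [show Finset.Icc 0 (n/2) = Finset.range (n/2+1) by
      ext x; simp [Nat.lt_succ_iff]]
    rw [Finset.sum_subset (Finset.range_subset_range.2 (show n/2+1 ≤ n+2 by omega))
      (fun x _ hx => by
        have hlt : n < 2*x := by simp only [Finset.mem_range] at hx; omega
        simp [Nat.choose_eq_zero_of_lt hlt])]
    refine Finset.sum_congr rfl (fun k _ => ?_)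
    rcases le_or_gt (2*k) n with h | h
    · rw [Fq, pow_cast_eq h]
    · rw [Fq_eq_zero h]
      simp [Nat.choose_eq_zero_of_lt h]
  have hodd : (∑ k ∈ Finset.range ((n + 1) / 2),
      (2:ℚ) ^ (n - 2 * k) * (n.choose (2 * k + 1) : ℚ) * (catalan k : ℚ) *
        (2 * (k:ℚ) + 1) / ((k:ℚ) + 2))
      = ∑ k ∈ Finset.range (n+2), aq n k := by
    rw [Finset.sum_subset (Finset.range_subset_range.2 (show (n+1)/2 ≤ n+2 by omega))
      (fun x _ hx => by
        have hlt : n < 2*x+1 := by simp only [Finset.mem_range] at hx; omega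
        simp [Nat.choose_eq_zero_of_lt hlt])]
    refine Finset.sum_congr rfl (fun k _ => ?_)
    rcases le_or_gt (2*k+1) n with h | h
    · rw [aq, pow_cast_eq (show 2*k ≤ n by omega)]
    · rw [aq_eq_zero h]
      simp [Nat.choose_eq_zero_of_lt h]
  rw [heven, hodd, touchard n, amdeberhan n]
  have h3 : ((n:ℚ)+3) ≠ 0 := by positivity
  field_simp
  ring
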